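/- arXiv:2005.02929 — 2 statements merged into one kernel-verified Lean document; each statement's English description precedes it below -/
import Mathlib

section
/- Let f: ℝ^{n₀} → ℝ^{n₂} be a single-hidden-layer neural network f(x) = W¹ φ(W⁰ x + b⁰) + b¹, where φ applies coordinatewise an activation slope-restricted in [α, β] with 0 ≤ α < β. Suppose there exist L² > 0 and a diagonal matrix T with nonnegative entries such that the symmetric matrix [[−2αβ(W⁰)ᵀTW⁰ − L²I, (α+β)(W⁰)ᵀT]; [(α+β)TW⁰, −2T + (W¹)ᵀW¹]] is negative semidefinite. Then f is globally Lipschitz with constant L, i.e., ‖f(x) − f(y)‖ ≤ L‖x − y‖ for all x, y. -/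
open Matrix

noncomputable def enorm {ι : Type*} [Fintype ι] (v : ι → ℝ) : ℝ :=
  Real.sqrt (∑ i, v i ^ 2)

theorem lipsdp_single_layer (n0 n1 n2 : ℕ) (φ : ℝ → ℝ) (α β : ℝ)
    (hα : 0 ≤ α) (hαβ : α < β)
    (hslope : ∀ s t : ℝ, s ≠ t →
      α ≤ (φ s - φ t) / (s - t) ∧ (φ s - φ t) / (s - t) ≤ β)
    (W0 : Matrix (Fin n1) (Fin n0) ℝ) (W1 : Matrix (Fin n2) (Fin n1) ℝ)
    (b0 : Fin n1 → ℝ) (b1 : Fin n2 → ℝ)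
    (L : ℝ) (hL : 0 < L) (lam : Fin n1 → ℝ) (hlam : ∀ i, 0 ≤ lam i)
    (hLMI : ∀ z : Fin n0 ⊕ Fin n1 → ℝ,
      z ⬝ᵥ (Matrix.fromBlocks
        ((-2 * α * β) • (W0ᵀ * Matrix.diagonal lam * W0)
          - L ^ 2 • (1 : Matrix (Fin n0) (Fin n0) ℝ))
        ((α + β) • (W0ᵀ * Matrix.diagonal lam))
        ((α + β) • (Matrix.diagonal lam * W0))
        ((-2 : ℝ) • Matrix.diagonal lam + W1ᵀ * W1)).mulVec z ≤ 0) :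
    ∀ x y : Fin n0 → ℝ,
      _root_.enorm ((W1.mulVec (fun j => φ ((W0.mulVec x + b0) j)) + b1)
           - (W1.mulVec (fun j => φ ((W0.mulVec y + b0) j)) + b1))
        ≤ L * _root_.enorm (x - y) := by
  intro x y
  set u : Fin n1 → ℝ := W0.mulVec x + b0 with hu
  set v : Fin n1 → ℝ := W0.mulVec y + b0 with hv
  set d : Fin n0 → ℝ := x - y with hd
  set w : Fin n1 → ℝ := fun j => φ (u j) - φ (v j) with hw
  set p : Fin n1 → ℝ := W0.mulVec d with hp
  have hpuv : p = u - v := by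
    simp [hp, hu, hv, hd, Matrix.mulVec_sub]
  -- per-coordinate slope inequality
  have hslope' : ∀ i, 0 ≤ (w i - α * p i) * (β * p i - w i) := by
    intro i
    have hpi : p i = u i - v i := by rw [hpuv]; rfl
    by_cases h : u i = v i
    · have : w i = 0 := by simp [hw, h]
      simp [this, hpi, h]
    · obtain ⟨h1, h2⟩ := hslope (u i) (v i) h
      have hne : u i - v i ≠ 0 := sub_ne_zero.mpr h
      have hwi : w i = ((φ (u i) - φ (v i)) / (u i - v i)) * (u i - v i) := by
        field_simp
        rfl
      set r := (φ (u i) - φ (v i)) / (u i - v i) with hr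
      rw [hwi, hpi]
      nlinarith [sq_nonneg (u i - v i), mul_nonneg (sub_nonneg.mpr h1) (sub_nonneg.mpr h2)]
  -- evaluate the LMI at z = (d, w)
  have key := hLMI (Sum.elim d w)
  have helim_l : Sum.elim d w ∘ Sum.inl = d := rfl
  have helim_r : Sum.elim d w ∘ Sum.inr = w := rfl
  rw [Matrix.fromBlocks_mulVec, helim_l, helim_r,
    sumElim_dotProduct_sumElim] at key
  have hdot_trans : ∀ (s : Fin n1 → ℝ), d ⬝ᵥ (W0ᵀ *ᵥ s) = p ⬝ᵥ s := by
    intro s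
    rw [Matrix.dotProduct_mulVec, Matrix.vecMul_transpose]
  have hdiag : ∀ (s t : Fin n1 → ℝ), s ⬝ᵥ (Matrix.diagonal lam *ᵥ t)
      = ∑ i, s i * (lam i * t i) := by
    intro s t
    simp [dotProduct, Matrix.mulVec_diagonal]
  -- rewrite the quadratic form
  have hform : d ⬝ᵥ (((-2 * α * β) • (W0ᵀ * Matrix.diagonal lam * W0)
          - L ^ 2 • (1 : Matrix (Fin n0) (Fin n0) ℝ)) *ᵥ d
          + ((α + β) • (W0ᵀ * Matrix.diagonal lam)) *ᵥ w)
      + w ⬝ᵥ (((α + β) • (Matrix.diagonal lam * W0)) *ᵥ d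
          + (((-2 : ℝ) • Matrix.diagonal lam + W1ᵀ * W1)) *ᵥ w)
      = (∑ i, 2 * lam i * ((w i - α * p i) * (β * p i - w i)))
        - L ^ 2 * (∑ i, d i ^ 2)
        + (W1 *ᵥ w) ⬝ᵥ (W1 *ᵥ w) := by
    have e1 : (W0ᵀ * Matrix.diagonal lam * W0) *ᵥ d
        = W0ᵀ *ᵥ (Matrix.diagonal lam *ᵥ p) := by
      rw [hp, Matrix.mulVec_mulVec, Matrix.mulVec_mulVec]
    have e2 : (W0ᵀ * Matrix.diagonal lam) *ᵥ w = W0ᵀ *ᵥ (Matrix.diagonal lam *ᵥ w) := by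
      rw [Matrix.mulVec_mulVec]
    have e3 : (Matrix.diagonal lam * W0) *ᵥ d = Matrix.diagonal lam *ᵥ p := by
      rw [hp, Matrix.mulVec_mulVec]
    have e4 : w ⬝ᵥ ((W1ᵀ * W1) *ᵥ w) = (W1 *ᵥ w) ⬝ᵥ (W1 *ᵥ w) := by
      rw [← Matrix.mulVec_mulVec, Matrix.dotProduct_mulVec, Matrix.vecMul_transpose]
    rw [dotProduct_add, dotProduct_add, Matrix.sub_mulVec,
      Matrix.add_mulVec, dotProduct_sub, dotProduct_add,
      Matrix.smul_mulVec, Matrix.smul_mulVec, Matrix.smul_mulVec,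
      Matrix.smul_mulVec, Matrix.smul_mulVec,
      dotProduct_smul, dotProduct_smul,
      dotProduct_smul, dotProduct_smul, dotProduct_smul,
      Matrix.one_mulVec,
      e1, e2, e3, e4, hdot_trans, hdot_trans, hdiag, hdiag, hdiag, hdiag]
    have hdd : d ⬝ᵥ d = ∑ i, d i ^ 2 := by
      simp [dotProduct, pow_two]
    rw [hdd]
    have hcomb : (-2 * α * β) • (∑ i, p i * (lam i * p i))
        + (α + β) • (∑ i, p i * (lam i * w i))
        + ((α + β) • (∑ i, w i * (lam i * p i))
          + (-2 : ℝ) • (∑ i, w i * (lam i * w i)))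
        = ∑ i, 2 * lam i * ((w i - α * p i) * (β * p i - w i)) := by
      simp only [smul_eq_mul, Finset.mul_sum, ← Finset.sum_add_distrib]
      apply Finset.sum_congr rfl
      intro i _
      ring
    simp only [smul_eq_mul] at hcomb ⊢
    linarith [hcomb]
  rw [hform] at key
  have hQ : 0 ≤ ∑ i, 2 * lam i * ((w i - α * p i) * (β * p i - w i)) := by
    apply Finset.sum_nonneg
    intro i _
    exact mul_nonneg (mul_nonneg (by norm_num) (hlam i)) (hslope' i)
  have hmain : (W1 *ᵥ w) ⬝ᵥ (W1 *ᵥ w) ≤ L ^ 2 * (∑ i, d i ^ 2) := by linarith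
  -- rewrite the difference as W1 *ᵥ w
  have hdiff : (W1.mulVec (fun j => φ (u j)) + b1)
      - (W1.mulVec (fun j => φ (v j)) + b1) = W1 *ᵥ w := by
    have : (fun j => φ (u j)) - (fun j => φ (v j)) = w := by
      funext j; simp [hw]
    rw [← this, Matrix.mulVec_sub]
    abel
  rw [hdiff]
  have henorm1 : _root_.enorm (W1 *ᵥ w) = Real.sqrt ((W1 *ᵥ w) ⬝ᵥ (W1 *ᵥ w)) := by
    unfold _root_.enorm
    congr 1
    simp [dotProduct, pow_two]
  have henorm2 : _root_.enorm (x - y) = Real.sqrt (∑ i, d i ^ 2) := by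
    unfold _root_.enorm
    rw [← hd]
  rw [henorm1, henorm2]
  calc Real.sqrt ((W1 *ᵥ w) ⬝ᵥ (W1 *ᵥ w))
      ≤ Real.sqrt (L ^ 2 * (∑ i, d i ^ 2)) := Real.sqrt_le_sqrt hmain
    _ = L * Real.sqrt (∑ i, d i ^ 2) := by
        rw [Real.sqrt_mul (sq_nonneg L), Real.sqrt_sq hL.le]
end

section
/- For the specific neural network f: ℝ → ℝ given by f(x) = W¹ tanh(W⁰x + b⁰) + b¹ with W⁰ = (−1, −1)ᵀ, b⁰ = (−1, 1)ᵀ, W¹ = (−1, 1), b¹ = −0.5, and for the matrix T = (e₁ − e₂)(e₁ − e₂)ᵀ, the matrix P(L², T) = [A; B]ᵀ [[0, T]; [T, −2T]] [A; B] + diag(−L²I, 0, (W¹)ᵀW¹) with A = [W⁰, 0] and B = [0, I₂] is negative semidefinite for every L² > 0, no matter how small. -/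
open Matrix

noncomputable def W0c : Matrix (Fin 2) (Fin 1) ℝ := !![-1; -1]

noncomputable def W1c : Matrix (Fin 1) (Fin 2) ℝ := !![-1, 1]

noncomputable def Tc : Matrix (Fin 2) (Fin 2) ℝ := Matrix.vecMulVec ![1, -1] ![1, -1]

noncomputable def Ac : Matrix (Fin 2) (Fin 1 ⊕ Fin 2) ℝ :=
  Matrix.of fun i => Sum.elim (fun j => W0c i j) (fun _ => 0)

noncomputable def Bc : Matrix (Fin 2) (Fin 1 ⊕ Fin 2) ℝ :=
  Matrix.of fun i => Sum.elim (fun _ => (0 : ℝ)) (fun j => (1 : Matrix (Fin 2) (Fin 2) ℝ) i j)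

noncomputable def Sc : Matrix (Fin 2 ⊕ Fin 2) (Fin 1 ⊕ Fin 2) ℝ :=
  Matrix.of (Sum.elim (fun i => Ac i) (fun i => Bc i))

noncomputable def Pc (L2 : ℝ) : Matrix (Fin 1 ⊕ Fin 2) (Fin 1 ⊕ Fin 2) ℝ :=
  Scᵀ * Matrix.fromBlocks 0 Tc Tc ((-2 : ℝ) • Tc) * Sc
    + Matrix.fromBlocks ((-L2) • (1 : Matrix (Fin 1) (Fin 1) ℝ)) 0 0 (W1cᵀ * W1c)

theorem counterexample_P_negsemidef :
    ∀ L2 : ℝ, 0 < L2 → ∀ z : Fin 1 ⊕ Fin 2 → ℝ, z ⬝ᵥ (Pc L2).mulVec z ≤ 0 := by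
  intro L2 hL2 z
  have h : z ⬝ᵥ (Pc L2).mulVec z
      = -L2 * (z (Sum.inl 0))^2 - (z (Sum.inr 0) - z (Sum.inr 1))^2 := by
    simp [Pc, Sc, Ac, Bc, Tc, W0c, W1c, dotProduct, mulVec, Matrix.mul_apply,
      Fintype.sum_sum_type, Fin.sum_univ_succ, fromBlocks, vecMulVec, Matrix.one_apply,
      Matrix.transpose_apply]
    ring
  rw [h]
  nlinarith [sq_nonneg (z (Sum.inl 0)), sq_nonneg (z (Sum.inr 0) - z (Sum.inr 1))]
end
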